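/- In the two-player lower-bound construction with parameters ε ∈ (0,1) and N a multiple of 3 with n = q = 2N/ε ∈ ℕ, suppose the encoding function Φ satisfies Condition 1 (minimum distance). Then for every γ ≥ 225, the offset DEC of the convexified instance satisfies decoreg_γ(co(J)) = sup_{M̄ ∈ co(M)} inf_{p ∈ Δ(Π)} sup_{M ∈ co(M)} E_{π∼p}[ Σ_{k=1,2}( max_{π'_k ∈ Π_k} f^M_k(π'_k, π_{−k}) − f^M_k(π) ) − γ·H²(M(π), M̄(π)) ] ≤ ε. -/

import Mathlib

open Finset
open scoped Classical BigOperators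

/-! ## The two-player zero-sum lower-bound construction

Parameters: `ε ∈ (0,1)`, `N` a multiple of `3`, `n = q = 2N/ε`.  Player 1's
decisions are `Π₁ = [2n]` (encoded as `Fin (2n)`, with index `i < n`
representing coordinate `i+1 ∈ [n]` and index `i ≥ n` representing coordinate
`i+1 ∈ [n+1, 2n]`), player 2's decisions are `Π₂ = {0, 1, …, 2q}` (encoded
as `Fin (2q+1)`, with `0` the safe action, values `1, …, q` the range of the
codewords for `𝒯₁`-models and `q+1, …, 2q` the range for `𝒯₂`-models).
An observation is a pair of a reward index `j ∈ Fin 3` (decoding to the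
deterministic zero-sum reward pairs `(0,0)`, `(1,−1)`, `(−δ, δ)` respectively,
where `δ = 10⁻³`) and a pure observation `o∘ ∈ [N]`.  The encoding function `Φ`
is represented by `Φ₁ Φ₂ : Finset (Fin N) → Fin n → Fin q`, where for
`T ∈ 𝒯₁` (i.e. `T.card = N/3`) the codeword is `i ↦ Φ₁ T i` (with second
coordinate encoded as `(Φ₁ T i) + 1 ∈ {1, …, q}`), and for `T ∈ 𝒯₂`
(i.e. `T.card = 2N/3`) the codeword is `n + i ↦ q + 1 + Φ₂ T i`. -/

section TwoPlayerLB

variable (N n q : ℕ)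

/-- The joint pure decision set `Π = Π₁ × Π₂`. -/
abbrev JointDec := Fin (2 * n) × Fin (2 * q + 1)

/-- The observation space: a reward index and a pure observation in `[N]`. -/
abbrev LBObs (N : ℕ) := Fin 3 × Fin N

/-- Player 1's reward decoded from the reward index (`δ = 10⁻³`). -/
noncomputable def rdecode : Fin 3 → ℝ := ![0, 1, -(1 / 1000)]

variable (Φ₁ Φ₂ : Finset (Fin N) → Fin n → Fin q)

/-- Membership `π ∈ B*(T)`. -/
def inBstar (T : Finset (Fin N)) (π : JointDec n q) : Prop :=
  if T.card = N / 3 then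
    ∃ i : Fin n, (π.1 : ℕ) = (i : ℕ) ∧ (π.2 : ℕ) = (Φ₁ T i : ℕ) + 1
  else
    ∃ i : Fin n, (π.1 : ℕ) = n + (i : ℕ) ∧ (π.2 : ℕ) = q + 1 + (Φ₂ T i : ℕ)

/-- The deterministic reward index of the model `M_T` at decision `π`:
rewards `(0,0)` if `π₂ = 0`, `(−δ, δ)` if `π ∈ B*(T)`, and `(1, −1)` otherwise. -/
noncomputable def ridxT (T : Finset (Fin N)) (π : JointDec n q) : Fin 3 :=
  if (π.2 : ℕ) = 0 then 0 else if inBstar N n q Φ₁ Φ₂ T π then 2 else 1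

/-- The reward index used by the models `M₀` and `M_{T,0}` (as if `B* = ∅`). -/
noncomputable def ridx0 (π : JointDec n q) : Fin 3 :=
  if (π.2 : ℕ) = 0 then 0 else 1

/-- The model `M_T`: deterministic rewards given by `ridxT`, pure observation
uniform on `T`. -/
noncomputable def modelT (T : Finset (Fin N)) (π : JointDec n q) :
    LBObs N → ℝ :=
  fun o => if o.1 = ridxT N n q Φ₁ Φ₂ T π ∧ o.2 ∈ T then ((T.card : ℝ))⁻¹ else 0

/-- The model `M_{T,0}`: rewards of `M₀` (as if `B* = ∅`), pure observation
uniform on `T`. -/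
noncomputable def modelT0 (T : Finset (Fin N)) (π : JointDec n q) :
    LBObs N → ℝ :=
  fun o => if o.1 = ridx0 n q π ∧ o.2 ∈ T then ((T.card : ℝ))⁻¹ else 0

/-- The model `M₀`: rewards as if `B* = ∅`, pure observation uniform on `[N]`. -/
noncomputable def model0 (π : JointDec n q) : LBObs N → ℝ :=
  fun o => if o.1 = ridx0 n q π then ((N : ℝ))⁻¹ else 0

/-- Expected reward `f^M_k` of player `k ∈ {0,1}` (zero-sum: `f₂ = −f₁`) under a
kernel `M` at the pure decision `π`. -/
noncomputable def fLB (M : JointDec n q → LBObs N → ℝ) (k : Fin 2)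
    (π : JointDec n q) : ℝ :=
  ∑ o, M π o * (if k = 0 then rdecode o.1 else -rdecode o.1)

/-- The Nash gap `h^M(π) = Σ_{k=1,2} (max_{π'_k} f^M_k(π'_k, π_{−k}) − f^M_k(π))`. -/
noncomputable def gapLB (M : JointDec n q → LBObs N → ℝ) (π : JointDec n q) : ℝ :=
  ((⨆ a : Fin (2 * n), fLB N n q M 0 (a, π.2)) - fLB N n q M 0 π)
    + ((⨆ b : Fin (2 * q + 1), fLB N n q M 1 (π.1, b)) - fLB N n q M 1 π)

/-- The index set `𝒯₁ ∪ 𝒯₂` of the model class. -/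
abbrev TIdx (N : ℕ) := {T : Finset (Fin N) // T.card = N / 3 ∨ T.card = 2 * N / 3}

/-- The mixture model `Σ_T ν(T) · M_T` determined by `ν ∈ Δ(𝒯₁ ∪ 𝒯₂)`; the
elements of `co(M)` are exactly those mixtures. -/
noncomputable def mixT (ν : TIdx N → ℝ) (π : JointDec n q) : LBObs N → ℝ :=
  fun o => ∑ T : TIdx N, ν T * modelT N n q Φ₁ Φ₂ T.1 π o

/-- Squared Hellinger distance (`H² ∈ [0,2]` normalization). -/
noncomputable def hellSq {X : Type} [Fintype X] (p q : X → ℝ) : ℝ :=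
  ∑ x, (Real.sqrt (p x) - Real.sqrt (q x)) ^ 2

/-- The offset DEC of the convexified lower-bound instance,
`decoreg_γ(co(J)) = sup_{M̄ ∈ co(M)} inf_{p ∈ Δ(Π)} sup_{M ∈ co(M)}
  E_{π∼p}[ h^M(π) − γ·H²(M(π), M̄(π)) ]`. -/
noncomputable def decoregLB (γ : ℝ) : ℝ :=
  ⨆ νb : {v : TIdx N → ℝ // v ∈ stdSimplex ℝ (TIdx N)},
    ⨅ p : {p : JointDec n q → ℝ // p ∈ stdSimplex ℝ (JointDec n q)},
      ⨆ ν : {v : TIdx N → ℝ // v ∈ stdSimplex ℝ (TIdx N)},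
        ∑ π, p.1 π *
          (gapLB N n q (mixT N n q Φ₁ Φ₂ ν.1) π
            - γ * hellSq (mixT N n q Φ₁ Φ₂ ν.1 π) (mixT N n q Φ₁ Φ₂ νb.1 π))

/-- **Condition 1** (minimum distance): within each family `𝒯_i`, codewords of
distinct sets differ in at least `q − N + 1` of their `n` coordinates. -/
def Condition1 : Prop :=
  (∀ T T' : Finset (Fin N), T.card = N / 3 → T'.card = N / 3 → T ≠ T' →
    q - N + 1 ≤ (Finset.univ.filter fun i : Fin n => Φ₁ T i ≠ Φ₁ T' i).card) ∧
  (∀ T T' : Finset (Fin N), T.card = 2 * N / 3 → T'.card = 2 * N / 3 → T ≠ T' →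
    q - N + 1 ≤ (Finset.univ.filter fun i : Fin n => Φ₂ T i ≠ Φ₂ T' i).card)

/-- **Condition 2** (near-uniformity of codeword symbols conditioned on any small
set `Q` being contained in `T`): `P_{T ∼ Unif(𝒯_i)}(Φ(T)(a₁) = a₂ | Q ⊆ T) ≤ 2/q`
(stated in cross-multiplied form). -/
def Condition2 : Prop :=
  (∀ Q : Finset (Fin N), (Q.card : ℝ) ≤ Real.sqrt N →
    ∀ (a₁ : Fin n) (a₂ : Fin q),
      ((Finset.univ.filter fun T : Finset (Fin N) =>
          T.card = N / 3 ∧ Q ⊆ T ∧ Φ₁ T a₁ = a₂).card : ℝ) ≤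
        (2 / (q : ℝ)) *
          ((Finset.univ.filter fun T : Finset (Fin N) =>
            T.card = N / 3 ∧ Q ⊆ T).card : ℝ)) ∧
  (∀ Q : Finset (Fin N), (Q.card : ℝ) ≤ Real.sqrt N →
    ∀ (a₁ : Fin n) (a₂ : Fin q),
      ((Finset.univ.filter fun T : Finset (Fin N) =>
          T.card = 2 * N / 3 ∧ Q ⊆ T ∧ Φ₂ T a₁ = a₂).card : ℝ) ≤
        (2 / (q : ℝ)) *
          ((Finset.univ.filter fun T : Finset (Fin N) =>
            T.card = 2 * N / 3 ∧ Q ⊆ T).card : ℝ))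

end TwoPlayerLB

section Algorithms

/-- An algorithm interacting for `T₀` rounds with decision set `P` and
observation set `O`: at round `t` it plays a randomized decision depending on
the history of the first `t` rounds, and after `T₀` rounds it outputs a
randomized decision. -/
structure LBAlg (P O : Type) (T₀ : ℕ) where
  dec : (t : ℕ) → (Fin t → P × O) → P → ℝ
  out : (Fin T₀ → P × O) → P → ℝ

/-- The randomization at every round, and for the output, is a valid probability
distribution. -/
def LBAlg.Valid {P O : Type} [Fintype P] {T₀ : ℕ} (alg : LBAlg P O T₀) : Prop :=
  (∀ (t : ℕ) (h : Fin t → P × O), alg.dec t h ∈ stdSimplex ℝ P) ∧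
  (∀ h : Fin T₀ → P × O, alg.out h ∈ stdSimplex ℝ P)

/-- Probability that the interaction of the algorithm `alg` with the true model
(kernel) `M` produces exactly the `T₀`-round history `h`. -/
noncomputable def algProbHist {P O : Type} [Fintype P] [Fintype O] {T₀ : ℕ}
    (alg : LBAlg P O T₀) (M : P → O → ℝ) (h : Fin T₀ → P × O) : ℝ :=
  ∏ t : Fin T₀,
    alg.dec t.1 (fun s => h ⟨s.1, s.2.trans t.2⟩) (h t).1 * M (h t).1 (h t).2

/-- Probability, under the interaction of `alg` with the model `M`, of an event
`E` over `T₀`-round histories. -/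
noncomputable def algProbEvent {P O : Type} [Fintype P] [Fintype O] {T₀ : ℕ}
    (alg : LBAlg P O T₀) (M : P → O → ℝ) (E : Set (Fin T₀ → P × O)) : ℝ :=
  ∑ h : Fin T₀ → P × O, if h ∈ E then algProbHist alg M h else 0

/-- Probability, under the interaction of `alg` with the model `M`, that the
output decision `π̂` lies in `E ⊆ P`. -/
noncomputable def algProbOut {P O : Type} [Fintype P] [Fintype O] {T₀ : ℕ}
    (alg : LBAlg P O T₀) (M : P → O → ℝ) (E : Set P) : ℝ :=
  ∑ h : Fin T₀ → P × O, algProbHist alg M h *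
    ∑ p : P, if p ∈ E then alg.out h p else 0

/-- Expectation, under the interaction of `alg` with the model `M`, of a function
`φ` of the output decision `π̂`. -/
noncomputable def algExpOut {P O : Type} [Fintype P] [Fintype O] {T₀ : ℕ}
    (alg : LBAlg P O T₀) (M : P → O → ℝ) (φ : P → ℝ) : ℝ :=
  ∑ h : Fin T₀ → P × O, algProbHist alg M h * ∑ p : P, alg.out h p * φ p

end Algorithms

/-! ### Auxiliary development for the proof -/

section AuxProof

variable (N n q : ℕ) (Φ₁ Φ₂ : Finset (Fin N) → Fin n → Fin q)

/-- uniform vector on a finite set -/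
noncomputable def uVec (S : Finset (Fin N)) : Fin N → ℝ :=
  fun x => if x ∈ S then ((S.card : ℝ))⁻¹ else 0

lemma sum_ite_mem' (S : Finset (Fin N)) (v : ℝ) :
    ∑ x : Fin N, (if x ∈ S then v else 0) = S.card * v := by
  rw [Finset.sum_ite_mem, Finset.univ_inter, Finset.sum_const, nsmul_eq_mul]

lemma sum_uVec (S : Finset (Fin N)) (h : 0 < S.card) :
    ∑ x : Fin N, uVec N S x = 1 := by
  unfold uVec
  rw [sum_ite_mem']
  have hc : (0:ℝ) < (S.card : ℝ) := by exact_mod_cast h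
  field_simp

lemma uVec_nonneg (S : Finset (Fin N)) (x : Fin N) : 0 ≤ uVec N S x := by
  unfold uVec; positivity

/-- observation marginal of a mixture at a decision with `π₂ = 0` -/
noncomputable def Ovec (ν : TIdx N → ℝ) : Fin N → ℝ :=
  fun x => ∑ T : TIdx N, ν T * uVec N T.1 x

lemma fLB_one_eq_neg (M : JointDec n q → LBObs N → ℝ) (π : JointDec n q) :
    fLB N n q M 1 π = -fLB N n q M 0 π := by
  unfold fLB
  rw [← Finset.sum_neg_distrib]
  refine Finset.sum_congr rfl fun o _ => ?_
  norm_num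

lemma fLB_mix_zero (hcard : ∀ T : TIdx N, 0 < T.1.card) (ν : TIdx N → ℝ)
    (π : JointDec n q) :
    fLB N n q (mixT N n q Φ₁ Φ₂ ν) 0 π
      = ∑ T : TIdx N, ν T * rdecode (ridxT N n q Φ₁ Φ₂ T.1 π) := by
  unfold fLB mixT modelT
  simp only [reduceIte, Finset.sum_mul]
  rw [Finset.sum_comm]
  refine Finset.sum_congr rfl fun T _ => ?_
  have : ∀ o : LBObs N,
      (ν T * if o.1 = ridxT N n q Φ₁ Φ₂ T.1 π ∧ o.2 ∈ T.1 then ((T.1.card : ℝ))⁻¹ else 0)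
        * rdecode o.1
      = ν T * (if o.1 = ridxT N n q Φ₁ Φ₂ T.1 π ∧ o.2 ∈ T.1
          then ((T.1.card : ℝ))⁻¹ * rdecode o.1 else 0) := by
    intro o; split <;> ring
  rw [Finset.sum_congr rfl fun o _ => this o, ← Finset.mul_sum]
  congr 1
  rw [Fintype.sum_prod_type]
  simp only [ite_and]
  rw [Finset.sum_comm]
  have h2 : ∀ x : Fin N, (∑ j : Fin 3, if j = ridxT N n q Φ₁ Φ₂ T.1 π then
      (if x ∈ T.1 then ((T.1.card : ℝ))⁻¹ * rdecode j else 0) else 0)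
      = if x ∈ T.1 then ((T.1.card : ℝ))⁻¹ * rdecode (ridxT N n q Φ₁ Φ₂ T.1 π) else 0 := by
    intro x
    rw [Finset.sum_ite_eq' Finset.univ (ridxT N n q Φ₁ Φ₂ T.1 π)]
    simp
  rw [Finset.sum_congr rfl fun x _ => h2 x, Finset.sum_ite_mem, Finset.univ_inter,
    Finset.sum_const, nsmul_eq_mul]
  have hc : (0:ℝ) < (T.1.card : ℝ) := by exact_mod_cast hcard T
  field_simp

/-- probability that the decision is in `B*` under mixture `ν` -/
noncomputable def PB (ν : TIdx N → ℝ) (π : JointDec n q) : ℝ :=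
  ∑ T : TIdx N, if inBstar N n q Φ₁ Φ₂ T.1 π then ν T else 0

/-- a coordinate of player 1 is dangerous under mixture `ν` -/
def DangerC (ν : TIdx N → ℝ) (π₁ : Fin (2 * n)) : Prop :=
  ∃ b : Fin (2 * q + 1), (b : ℕ) ≠ 0 ∧ 1 ≤ (1 + 1/1000) * PB N n q Φ₁ Φ₂ ν (π₁, b)

lemma PB_nonneg (ν : TIdx N → ℝ) (hν : ∀ T, 0 ≤ ν T) (π : JointDec n q) :
    0 ≤ PB N n q Φ₁ Φ₂ ν π := by
  refine Finset.sum_nonneg fun T _ => ?_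
  split
  · exact hν T
  · exact le_rfl

lemma PB_le_one (ν : TIdx N → ℝ) (hν : ∀ T, 0 ≤ ν T)
    (hs : ∑ T : TIdx N, ν T = 1) (π : JointDec n q) :
    PB N n q Φ₁ Φ₂ ν π ≤ 1 := by
  rw [← hs]
  refine Finset.sum_le_sum fun T _ => ?_
  split
  · exact le_rfl
  · exact hν T

end AuxProof
section AuxProof2

variable (N n q : ℕ) (Φ₁ Φ₂ : Finset (Fin N) → Fin n → Fin q)

lemma ridxT_at_zero (T : Finset (Fin N)) (π₁ : Fin (2 * n)) :
    ridxT N n q Φ₁ Φ₂ T (π₁, (0 : Fin (2 * q + 1))) = 0 := by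
  unfold ridxT
  simp

lemma f0_at_zero (hcard : ∀ T : TIdx N, 0 < T.1.card) (ν : TIdx N → ℝ)
    (π₁ : Fin (2 * n)) :
    fLB N n q (mixT N n q Φ₁ Φ₂ ν) 0 (π₁, (0 : Fin (2 * q + 1))) = 0 := by
  rw [fLB_mix_zero N n q Φ₁ Φ₂ hcard]
  refine Finset.sum_eq_zero fun T _ => ?_
  rw [ridxT_at_zero]
  simp [rdecode]

lemma f1_eval (hcard : ∀ T : TIdx N, 0 < T.1.card) (ν : TIdx N → ℝ)
    (hs : ∑ T : TIdx N, ν T = 1) (π₁ : Fin (2 * n)) (b : Fin (2 * q + 1))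
    (hb : (b : ℕ) ≠ 0) :
    fLB N n q (mixT N n q Φ₁ Φ₂ ν) 1 (π₁, b)
      = (1 + 1/1000) * PB N n q Φ₁ Φ₂ ν (π₁, b) - 1 := by
  rw [fLB_one_eq_neg, fLB_mix_zero N n q Φ₁ Φ₂ hcard, ← Finset.sum_neg_distrib]
  have : ∀ T : TIdx N, -(ν T * rdecode (ridxT N n q Φ₁ Φ₂ T.1 (π₁, b)))
      = (1 + 1/1000) * (if inBstar N n q Φ₁ Φ₂ T.1 (π₁, b) then ν T else 0) - ν T := by
    intro T
    unfold ridxT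
    rw [if_neg hb]
    by_cases hB : inBstar N n q Φ₁ Φ₂ T.1 (π₁, b) <;> simp [hB, rdecode] <;> ring
  rw [Finset.sum_congr rfl fun T _ => this T, Finset.sum_sub_distrib, hs, ← Finset.mul_sum]
  rfl

lemma gapLB_nonneg (M : JointDec n q → LBObs N → ℝ) (hn0 : 0 < n) (π : JointDec n q) :
    0 ≤ gapLB N n q M π := by
  unfold gapLB
  have : Nonempty (Fin (2 * n)) := ⟨⟨0, by omega⟩⟩
  have h1 : fLB N n q M 0 π ≤ ⨆ a : Fin (2 * n), fLB N n q M 0 (a, π.2) := by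
    have := le_ciSup (f := fun a : Fin (2 * n) => fLB N n q M 0 (a, π.2))
      (Set.Finite.bddAbove (Set.finite_range _)) π.1
    simpa using this
  have h2 : fLB N n q M 1 π ≤ ⨆ b : Fin (2 * q + 1), fLB N n q M 1 (π.1, b) := by
    have := le_ciSup (f := fun b : Fin (2 * q + 1) => fLB N n q M 1 (π.1, b))
      (Set.Finite.bddAbove (Set.finite_range _)) π.2
    simpa using this
  linarith

lemma gap_le_danger (hcard : ∀ T : TIdx N, 0 < T.1.card) (hn0 : 0 < n)
    (ν : TIdx N → ℝ) (hν : ∀ T, 0 ≤ ν T) (hs : ∑ T : TIdx N, ν T = 1)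
    (π₁ : Fin (2 * n)) :
    gapLB N n q (mixT N n q Φ₁ Φ₂ ν) (π₁, (0 : Fin (2 * q + 1)))
      ≤ if DangerC N n q Φ₁ Φ₂ ν π₁ then 1/1000 else 0 := by
  have hne : Nonempty (Fin (2 * n)) := ⟨⟨0, by omega⟩⟩
  unfold gapLB
  have hf0 : ∀ a : Fin (2 * n),
      fLB N n q (mixT N n q Φ₁ Φ₂ ν) 0 (a, (0 : Fin (2 * q + 1))) = 0 :=
    f0_at_zero N n q Φ₁ Φ₂ hcard ν
  have hsup0 : (⨆ a : Fin (2 * n),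
      fLB N n q (mixT N n q Φ₁ Φ₂ ν) 0 (a, ((π₁, (0 : Fin (2 * q + 1))) : JointDec n q).2)) = 0 := by
    have : ∀ a : Fin (2 * n),
        fLB N n q (mixT N n q Φ₁ Φ₂ ν) 0 (a, ((π₁, (0 : Fin (2 * q + 1))) : JointDec n q).2) = 0 :=
      hf0
    rw [iSup_congr this]
    exact ciSup_const
  rw [hsup0]
  have hz : fLB N n q (mixT N n q Φ₁ Φ₂ ν) 0 (π₁, (0 : Fin (2 * q + 1))) = 0 := hf0 π₁
  have hz1 : fLB N n q (mixT N n q Φ₁ Φ₂ ν) 1 (π₁, (0 : Fin (2 * q + 1))) = 0 := by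
    rw [fLB_one_eq_neg, hz, neg_zero]
  rw [hz, hz1]
  have hsup1 : (⨆ b : Fin (2 * q + 1),
      fLB N n q (mixT N n q Φ₁ Φ₂ ν) 1 (((π₁, (0 : Fin (2 * q + 1))) : JointDec n q).1, b))
      ≤ if DangerC N n q Φ₁ Φ₂ ν π₁ then 1/1000 else 0 := by
    refine ciSup_le fun b => ?_
    by_cases hb : (b : ℕ) = 0
    · have hb0 : b = (0 : Fin (2 * q + 1)) := Fin.ext (by simpa using hb)
      rw [hb0, fLB_one_eq_neg, hf0 π₁, neg_zero]
      split <;> norm_num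
    · rw [f1_eval N n q Φ₁ Φ₂ hcard ν hs π₁ b hb]
      by_cases hd : DangerC N n q Φ₁ Φ₂ ν π₁
      · rw [if_pos hd]
        have := PB_le_one N n q Φ₁ Φ₂ ν hν hs (π₁, b)
        linarith
      · rw [if_neg hd]
        unfold DangerC at hd
        push_neg at hd
        have := hd b hb
        linarith
  linarith [hsup1]

end AuxProof2
section AuxProof3

variable (N n q : ℕ) (Φ₁ Φ₂ : Finset (Fin N) → Fin n → Fin q)

lemma hellSq_nonneg {X : Type} [Fintype X] (p q : X → ℝ) : 0 ≤ hellSq p q :=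
  Finset.sum_nonneg fun x _ => sq_nonneg _

lemma hellSq_self {X : Type} [Fintype X] (p : X → ℝ) : hellSq p p = 0 := by
  unfold hellSq; simp

lemma hellSq_comm {X : Type} [Fintype X] (p q : X → ℝ) : hellSq p q = hellSq q p := by
  unfold hellSq
  refine Finset.sum_congr rfl fun x _ => ?_
  ring

lemma l2_triangle {X : Type} [Fintype X] (a b : X → ℝ) :
    Real.sqrt (∑ x, (a x + b x) ^ 2)
      ≤ Real.sqrt (∑ x, a x ^ 2) + Real.sqrt (∑ x, b x ^ 2) := by
  have hA : (0:ℝ) ≤ ∑ x, a x ^ 2 := Finset.sum_nonneg fun x _ => sq_nonneg _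
  have hB : (0:ℝ) ≤ ∑ x, b x ^ 2 := Finset.sum_nonneg fun x _ => sq_nonneg _
  have hcs : (∑ x, a x * b x) ^ 2 ≤ (∑ x, a x ^ 2) * ∑ x, b x ^ 2 :=
    Finset.sum_mul_sq_le_sq_mul_sq Finset.univ a b
  have hab : ∑ x, a x * b x ≤ Real.sqrt (∑ x, a x ^ 2) * Real.sqrt (∑ x, b x ^ 2) := by
    have h1 : ∑ x, a x * b x ≤ |∑ x, a x * b x| := le_abs_self _
    have h2 : |∑ x, a x * b x| = Real.sqrt ((∑ x, a x * b x) ^ 2) := by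
      rw [Real.sqrt_sq_eq_abs]
    rw [← Real.sqrt_mul hA]
    calc ∑ x, a x * b x ≤ Real.sqrt ((∑ x, a x * b x) ^ 2) := by rw [← h2]; exact h1
      _ ≤ Real.sqrt ((∑ x, a x ^ 2) * ∑ x, b x ^ 2) := Real.sqrt_le_sqrt hcs
  have hexp : ∑ x, (a x + b x) ^ 2
      ≤ (Real.sqrt (∑ x, a x ^ 2) + Real.sqrt (∑ x, b x ^ 2)) ^ 2 := by
    have e1 : ∑ x, (a x + b x) ^ 2 = (∑ x, a x ^ 2) + 2 * (∑ x, a x * b x) + ∑ x, b x ^ 2 := by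
      have e0 : ∑ x, (a x + b x) ^ 2 = ∑ x, (a x ^ 2 + 2 * (a x * b x) + b x ^ 2) :=
        Finset.sum_congr rfl fun x _ => by ring
      rw [e0, Finset.sum_add_distrib, Finset.sum_add_distrib, Finset.mul_sum]
    nlinarith [hab, Real.sq_sqrt hA, Real.sq_sqrt hB, Real.sqrt_nonneg (∑ x, a x ^ 2),
      Real.sqrt_nonneg (∑ x, b x ^ 2)]
  calc Real.sqrt (∑ x, (a x + b x) ^ 2)
      ≤ Real.sqrt ((Real.sqrt (∑ x, a x ^ 2) + Real.sqrt (∑ x, b x ^ 2)) ^ 2) :=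
        Real.sqrt_le_sqrt hexp
    _ = Real.sqrt (∑ x, a x ^ 2) + Real.sqrt (∑ x, b x ^ 2) := by
        rw [Real.sqrt_sq (by positivity)]

end AuxProof3
section AuxProof4

variable (N n q : ℕ) (Φ₁ Φ₂ : Finset (Fin N) → Fin n → Fin q)

lemma hell_triangle {X : Type} [Fintype X] (p w r : X → ℝ) :
    Real.sqrt (hellSq p r) ≤ Real.sqrt (hellSq p w) + Real.sqrt (hellSq w r) := by
  have := l2_triangle (fun x => Real.sqrt (p x) - Real.sqrt (w x))
    (fun x => Real.sqrt (w x) - Real.sqrt (r x))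
  unfold hellSq
  simpa using this

lemma mix_at_zero (ν : TIdx N → ℝ) (π₁ : Fin (2 * n)) (o : LBObs N) :
    mixT N n q Φ₁ Φ₂ ν (π₁, (0 : Fin (2 * q + 1))) o
      = if o.1 = 0 then Ovec N ν o.2 else 0 := by
  unfold mixT modelT Ovec uVec
  by_cases h : o.1 = (0 : Fin 3)
  · rw [if_pos h]
    refine Finset.sum_congr rfl fun T _ => ?_
    rw [ridxT_at_zero]
    by_cases hx : o.2 ∈ T.1
    · rw [if_pos ⟨h, hx⟩, if_pos hx]
    · rw [if_neg (fun hc => hx hc.2), if_neg hx, mul_zero]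
  · rw [if_neg h]
    refine Finset.sum_eq_zero fun T _ => ?_
    rw [ridxT_at_zero, if_neg (fun hc => h hc.1), mul_zero]

lemma hell_mix_at_zero (ν ν' : TIdx N → ℝ) (π₁ : Fin (2 * n)) :
    hellSq (mixT N n q Φ₁ Φ₂ ν (π₁, (0 : Fin (2 * q + 1))))
        (mixT N n q Φ₁ Φ₂ ν' (π₁, (0 : Fin (2 * q + 1))))
      = hellSq (Ovec N ν) (Ovec N ν') := by
  unfold hellSq
  rw [Fintype.sum_prod_type]
  have h : ∀ j : Fin 3, ∀ x : Fin N,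
      (Real.sqrt (mixT N n q Φ₁ Φ₂ ν (π₁, (0 : Fin (2 * q + 1))) (j, x))
        - Real.sqrt (mixT N n q Φ₁ Φ₂ ν' (π₁, (0 : Fin (2 * q + 1))) (j, x))) ^ 2
      = if j = 0 then (Real.sqrt (Ovec N ν x) - Real.sqrt (Ovec N ν' x)) ^ 2 else 0 := by
    intro j x
    rw [mix_at_zero, mix_at_zero]
    by_cases hj : j = (0 : Fin 3) <;> simp [hj]
  rw [Finset.sum_congr rfl fun j _ => Finset.sum_congr rfl fun x _ => h j x]
  simp [Finset.sum_ite_eq]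

lemma sq_sqrt_sub_le (a b : ℝ) (ha : 0 ≤ a) (hb : 0 ≤ b) :
    (Real.sqrt a - Real.sqrt b) ^ 2 ≤ |a - b| := by
  rcases le_total b a with h | h
  · rw [abs_of_nonneg (by linarith)]
    have hs : Real.sqrt b ≤ Real.sqrt a := Real.sqrt_le_sqrt h
    nlinarith [Real.sq_sqrt ha, Real.sq_sqrt hb, Real.sqrt_nonneg a, Real.sqrt_nonneg b]
  · rw [abs_of_nonpos (by linarith)]
    have hs : Real.sqrt a ≤ Real.sqrt b := Real.sqrt_le_sqrt h
    nlinarith [Real.sq_sqrt ha, Real.sq_sqrt hb, Real.sqrt_nonneg a, Real.sqrt_nonneg b]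

lemma Ovec_nonneg (ν : TIdx N → ℝ) (hν : ∀ T, 0 ≤ ν T) (x : Fin N) :
    0 ≤ Ovec N ν x :=
  Finset.sum_nonneg fun T _ => mul_nonneg (hν T) (uVec_nonneg N _ x)

/-- If `ν` has an atom of mass `≥ 997/1001` at `T*`, the observation marginal is
Hellinger-close to the uniform distribution on `T*`. -/
lemma hell_O_atom (hcard : ∀ T : TIdx N, 0 < T.1.card)
    (ν : TIdx N → ℝ) (hν : ∀ T, 0 ≤ ν T) (hs : ∑ T : TIdx N, ν T = 1)
    (Ts : TIdx N) (hTs : (997/1001 : ℝ) ≤ ν Ts) :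
    hellSq (Ovec N ν) (uVec N Ts.1) ≤ 1/100 := by
  have h1 : hellSq (Ovec N ν) (uVec N Ts.1)
      ≤ ∑ x : Fin N, |Ovec N ν x - uVec N Ts.1 x| :=
    Finset.sum_le_sum fun x _ => sq_sqrt_sub_le _ _ (Ovec_nonneg N ν hν x) (uVec_nonneg N _ x)
  have h2 : ∀ x : Fin N, |Ovec N ν x - uVec N Ts.1 x|
      ≤ ∑ T : TIdx N, (if T = Ts then 0 else ν T * (uVec N T.1 x + uVec N Ts.1 x)) := by
    intro x
    have e : Ovec N ν x - uVec N Ts.1 x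
        = ∑ T : TIdx N, ν T * (uVec N T.1 x - uVec N Ts.1 x) := by
      unfold Ovec
      calc (∑ T : TIdx N, ν T * uVec N T.1 x) - uVec N Ts.1 x
          = (∑ T : TIdx N, ν T * uVec N T.1 x) - (∑ T : TIdx N, ν T) * uVec N Ts.1 x := by
            rw [hs, one_mul]
        _ = ∑ T : TIdx N, (ν T * uVec N T.1 x - ν T * uVec N Ts.1 x) := by
            rw [Finset.sum_mul, ← Finset.sum_sub_distrib]
        _ = ∑ T : TIdx N, ν T * (uVec N T.1 x - uVec N Ts.1 x) :=
            Finset.sum_congr rfl fun T _ => by ring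
    rw [e]
    refine (Finset.abs_sum_le_sum_abs _ _).trans (Finset.sum_le_sum fun T _ => ?_)
    by_cases hT : T = Ts
    · simp [hT]
    · rw [if_neg hT, abs_mul, abs_of_nonneg (hν T)]
      refine mul_le_mul_of_nonneg_left ?_ (hν T)
      refine (abs_sub _ _).trans ?_
      rw [abs_of_nonneg (uVec_nonneg N _ x), abs_of_nonneg (uVec_nonneg N _ x)]
  have h3 : ∑ x : Fin N, ∑ T : TIdx N,
      (if T = Ts then 0 else ν T * (uVec N T.1 x + uVec N Ts.1 x))
      = ∑ T : TIdx N, (if T = Ts then 0 else 2 * ν T) := by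
    rw [Finset.sum_comm]
    refine Finset.sum_congr rfl fun T _ => ?_
    by_cases hT : T = Ts
    · simp [hT]
    · simp only [if_neg hT]
      rw [← Finset.mul_sum, Finset.sum_add_distrib, sum_uVec N _ (hcard T),
        sum_uVec N _ (hcard Ts)]
      ring
  have h4 : ∑ T : TIdx N, (if T = Ts then 0 else 2 * ν T) = 2 - 2 * ν Ts := by
    have : ∀ T : TIdx N, (if T = Ts then 0 else 2 * ν T)
        = 2 * ν T - (if T = Ts then 2 * ν T else 0) := by
      intro T; by_cases hT : T = Ts <;> simp [hT]
    rw [Finset.sum_congr rfl fun T _ => this T, Finset.sum_sub_distrib,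
      Finset.sum_ite_eq' Finset.univ Ts, ← Finset.mul_sum, hs]
    simp
  have h5 : hellSq (Ovec N ν) (uVec N Ts.1)
      ≤ ∑ T : TIdx N, (if T = Ts then 0 else 2 * ν T) := by
    rw [← h3]
    exact h1.trans (Finset.sum_le_sum fun x _ => h2 x)
  rw [h4] at h5
  linarith

end AuxProof4
section AuxProof5

variable (N : ℕ)

lemma hell_eq_two_sub (p w : Fin N → ℝ) (hp : ∀ x, 0 ≤ p x) (hw : ∀ x, 0 ≤ w x)
    (hps : ∑ x, p x = 1) (hws : ∑ x, w x = 1) :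
    hellSq p w = 2 - 2 * ∑ x, Real.sqrt (p x) * Real.sqrt (w x) := by
  unfold hellSq
  have e : ∀ x, (Real.sqrt (p x) - Real.sqrt (w x)) ^ 2
      = p x + w x - 2 * (Real.sqrt (p x) * Real.sqrt (w x)) := by
    intro x
    have := Real.sq_sqrt (hp x)
    have := Real.sq_sqrt (hw x)
    nlinarith [Real.sqrt_nonneg (p x), Real.sqrt_nonneg (w x)]
  rw [Finset.sum_congr rfl fun x _ => e x, Finset.sum_sub_distrib,
    Finset.sum_add_distrib, hps, hws, ← Finset.mul_sum]
  ring

lemma hell_uu (S S' : Finset (Fin N)) (m : ℕ) (hm : 0 < m)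
    (hS : S.card = m) (hS' : S'.card = 2 * m) :
    (49/100 : ℝ) ≤ hellSq (uVec N S) (uVec N S') := by
  have hm' : (0:ℝ) < (m:ℝ) := by exact_mod_cast hm
  have hSpos : 0 < S.card := by omega
  have hS'pos : 0 < S'.card := by omega
  rw [hell_eq_two_sub N _ _ (uVec_nonneg N S) (uVec_nonneg N S')
    (sum_uVec N S hSpos) (sum_uVec N S' hS'pos)]
  have hx : ∀ x : Fin N, Real.sqrt (uVec N S x) * Real.sqrt (uVec N S' x)
      = if x ∈ S ∩ S' then Real.sqrt ((m:ℝ))⁻¹ * Real.sqrt ((2*(m:ℝ)))⁻¹ else 0 := by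
    intro x
    unfold uVec
    by_cases h1 : x ∈ S <;> by_cases h2 : x ∈ S' <;>
      simp [h1, h2, Finset.mem_inter, hS, hS']
  rw [Finset.sum_congr rfl fun x _ => hx x, sum_ite_mem']
  have hcap : ((S ∩ S').card : ℝ) ≤ (m:ℝ) := by
    have : (S ∩ S').card ≤ S.card := Finset.card_le_card (Finset.inter_subset_left)
    exact_mod_cast hS ▸ this
  have hcpos : (0:ℝ) ≤ Real.sqrt ((m:ℝ))⁻¹ * Real.sqrt ((2*(m:ℝ)))⁻¹ := by positivity
  have hval : (m:ℝ) * (Real.sqrt ((m:ℝ))⁻¹ * Real.sqrt ((2*(m:ℝ)))⁻¹) = Real.sqrt 2 / 2 := by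
    rw [Real.sqrt_inv, Real.sqrt_inv, Real.sqrt_mul (by norm_num : (0:ℝ) ≤ 2)]
    have e2 : Real.sqrt 2 * Real.sqrt 2 = 2 := Real.mul_self_sqrt (by norm_num)
    have em : Real.sqrt (m:ℝ) * Real.sqrt (m:ℝ) = (m:ℝ) := Real.mul_self_sqrt hm'.le
    have hsm : (0:ℝ) < Real.sqrt (m:ℝ) := Real.sqrt_pos.2 hm'
    have hs2 : (0:ℝ) < Real.sqrt 2 := Real.sqrt_pos.2 (by norm_num)
    field_simp
    nlinarith [e2, em]
  have hcross : ((S ∩ S').card : ℝ) * (Real.sqrt ((m:ℝ))⁻¹ * Real.sqrt ((2*(m:ℝ)))⁻¹)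
      ≤ Real.sqrt 2 / 2 := by
    rw [← hval]
    exact mul_le_mul_of_nonneg_right hcap hcpos
  have h2 : Real.sqrt 2 ≤ 1.51 := by
    nlinarith [Real.sq_sqrt (by norm_num : (0:ℝ) ≤ 2), Real.sqrt_nonneg 2]
  linarith

end AuxProof5
section AuxProof6

variable (N n q : ℕ) (Φ₁ Φ₂ : Finset (Fin N) → Fin n → Fin q)

/-- Atom lemma: if more than `2N` coordinates have a `1000/1001`-majority symbol
within the family of sets of cardinality `c`, then `ν` has an atom of mass
`≥ 997/1001` in that family. -/
lemma atom_lemma (c : ℕ) (Φ : Finset (Fin N) → Fin n → Fin q)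
    (hqn : q = n) (hnN : 2 * N + 1 ≤ n)
    (hdist : ∀ T T' : Finset (Fin N), T.card = c → T'.card = c → T ≠ T' →
      q - N + 1 ≤ (Finset.univ.filter fun i : Fin n => Φ T i ≠ Φ T' i).card)
    (ν : TIdx N → ℝ) (hν : ∀ T, 0 ≤ ν T) (hs : ∑ T : TIdx N, ν T = 1)
    (D : Finset (Fin n)) (hD : 2 * N < D.card)
    (β : Fin n → Fin q)
    (hβ : ∀ i ∈ D, (1000/1001 : ℝ)
      ≤ ∑ T : TIdx N, (if T.1.card = c ∧ Φ T.1 i = β i then ν T else 0)) :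
    ∃ Ts : TIdx N, Ts.1.card = c ∧ (997/1001 : ℝ) ≤ ν Ts := by
  classical
  set X : TIdx N → ℕ :=
    fun T => (D.filter fun i => ¬(T.1.card = c ∧ Φ T.1 i = β i)).card with hX
  -- expected number of disagreements is small
  have hXsum : ∑ T : TIdx N, ν T * (X T : ℝ) ≤ (1/1001) * D.card := by
    have e1 : ∀ T : TIdx N, ν T * (X T : ℝ)
        = ∑ i ∈ D, (ν T - (if T.1.card = c ∧ Φ T.1 i = β i then ν T else 0)) := by
      intro T
      have : (X T : ℝ) = ∑ i ∈ D, (if T.1.card = c ∧ Φ T.1 i = β i then (0:ℝ) else 1) := by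
        simp only [hX, Finset.card_filter]
        push_cast
        refine Finset.sum_congr rfl fun i _ => ?_
        by_cases h : T.1.card = c ∧ Φ T.1 i = β i <;> simp [h]
      rw [this, Finset.mul_sum]
      refine Finset.sum_congr rfl fun i _ => ?_
      by_cases h : T.1.card = c ∧ Φ T.1 i = β i <;> simp [h]
    rw [Finset.sum_congr rfl fun T _ => e1 T, Finset.sum_comm]
    have e2 : ∀ i ∈ D, ∑ T : TIdx N,
        (ν T - (if T.1.card = c ∧ Φ T.1 i = β i then ν T else 0)) ≤ 1/1001 := by
      intro i hi
      rw [Finset.sum_sub_distrib, hs]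
      have := hβ i hi
      linarith
    calc ∑ i ∈ D, ∑ T : TIdx N,
          (ν T - (if T.1.card = c ∧ Φ T.1 i = β i then ν T else 0))
        ≤ ∑ _i ∈ D, (1/1001 : ℝ) := Finset.sum_le_sum e2
      _ = (1/1001) * D.card := by rw [Finset.sum_const, nsmul_eq_mul]; ring
  set bad : Finset (TIdx N) := Finset.univ.filter fun T => D.card ≤ 4 * X T with hbad
  have hbadmass : ∑ T ∈ bad, ν T ≤ 4/1001 := by
    have h1 : (D.card : ℝ) * ∑ T ∈ bad, ν T ≤ 4 * ∑ T : TIdx N, ν T * (X T : ℝ) := by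
      rw [Finset.mul_sum]
      have hle : ∑ T ∈ bad, (D.card : ℝ) * ν T ≤ ∑ T ∈ bad, 4 * (ν T * (X T : ℝ)) := by
        refine Finset.sum_le_sum fun T hT => ?_
        rw [hbad] at hT
        have h4 : (D.card : ℝ) ≤ 4 * (X T : ℝ) := by
          exact_mod_cast (Finset.mem_filter.mp hT).2
        nlinarith [hν T]
      have e3 : ∑ T ∈ bad, (4:ℝ) * (ν T * (X T : ℝ)) = 4 * ∑ T ∈ bad, ν T * (X T : ℝ) :=
        (Finset.mul_sum _ _ _).symm
      have hsplitX : ∑ T ∈ bad, ν T * (X T : ℝ) + ∑ T ∈ Finset.univ.filter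
          (fun T : TIdx N => ¬(D.card ≤ 4 * X T)), ν T * (X T : ℝ)
          = ∑ T : TIdx N, ν T * (X T : ℝ) := by
        rw [hbad]
        exact Finset.sum_filter_add_sum_filter_not _ _ _
      have hposX : (0:ℝ) ≤ ∑ T ∈ Finset.univ.filter (fun T : TIdx N => ¬(D.card ≤ 4 * X T)),
          ν T * (X T : ℝ) :=
        Finset.sum_nonneg fun T _ => mul_nonneg (hν T) (Nat.cast_nonneg _)
      linarith
    have hDpos : (0:ℝ) < (D.card : ℝ) := by
      have : 0 < D.card := by omega
      exact_mod_cast this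
    have h2 : (D.card : ℝ) * ∑ T ∈ bad, ν T ≤ 4 * ((1/1001) * D.card) := by
      calc (D.card : ℝ) * ∑ T ∈ bad, ν T ≤ 4 * ∑ T : TIdx N, ν T * (X T : ℝ) := h1
        _ ≤ 4 * ((1/1001) * D.card) := by linarith
    rw [mul_comm] at h2
    have := (mul_le_mul_iff_of_pos_right hDpos).mp (by linarith : (∑ T ∈ bad, ν T) * (D.card:ℝ) ≤ (4/1001) * D.card)
    exact this
  set good : Finset (TIdx N) := Finset.univ.filter fun T => ¬(D.card ≤ 4 * X T) with hgood
  have hgoodmass : (997/1001 : ℝ) ≤ ∑ T ∈ good, ν T := by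
    have := Finset.sum_filter_add_sum_filter_not Finset.univ
      (fun T : TIdx N => D.card ≤ 4 * X T) ν
    rw [← hbad] at this
    rw [hgood]
    linarith [hs ▸ this]
  -- any good element has card c
  have hgcard : ∀ T ∈ good, T.1.card = c := by
    intro T hT
    rw [hgood, Finset.mem_filter] at hT
    by_contra hc
    have heq : (D.filter fun i => ¬(T.1.card = c ∧ Φ T.1 i = β i)) = D :=
      Finset.filter_true_of_mem fun i _ => fun h => hc h.1
    have : X T = D.card := by simp only [hX, heq]
    omega
  -- good has at most one element
  have huniq : ∀ T ∈ good, ∀ T' ∈ good, T = T' := by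
    intro T hT T' hT'
    by_contra hne
    have hc := hgcard T hT
    have hc' := hgcard T' hT'
    have hXT : 4 * X T < D.card := by
      rw [hgood, Finset.mem_filter] at hT; omega
    have hXT' : 4 * X T' < D.card := by
      rw [hgood, Finset.mem_filter] at hT'; omega
    set A : Finset (Fin n) := D.filter (fun i => T.1.card = c ∧ Φ T.1 i = β i) with hA
    set A' : Finset (Fin n) := D.filter (fun i => T'.1.card = c ∧ Φ T'.1 i = β i) with hA'
    have hcardA : A.card + X T = D.card := by
      simp only [hA, hX]
      exact Finset.card_filter_add_card_filter_not _
    have hcardA' : A'.card + X T' = D.card := by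
      simp only [hA', hX]
      exact Finset.card_filter_add_card_filter_not _
    have hunion : (A ∪ A').card ≤ D.card := by
      refine Finset.card_le_card ?_
      intro i hi
      rcases Finset.mem_union.mp hi with h | h
      · exact (Finset.mem_filter.mp h).1
      · exact (Finset.mem_filter.mp h).1
    have hinter : (A ∩ A').card + (A ∪ A').card = A.card + A'.card :=
      Finset.card_inter_add_card_union A A'
    have hIN : N + 1 ≤ (A ∩ A').card := by omega
    -- A ∩ A' is contained in the agreement set of Φ T and Φ T'
    have hsub : A ∩ A' ⊆ Finset.univ.filter fun i => Φ T.1 i = Φ T'.1 i := by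
      intro i hi
      rw [Finset.mem_inter, hA, hA', Finset.mem_filter, Finset.mem_filter] at hi
      rw [Finset.mem_filter]
      exact ⟨Finset.mem_univ i, by rw [hi.1.2.2, hi.2.2.2]⟩
    have hagree : (A ∩ A').card ≤ (Finset.univ.filter fun i => Φ T.1 i = Φ T'.1 i).card :=
      Finset.card_le_card hsub
    have hTne : T.1 ≠ T'.1 := fun h => hne (Subtype.ext h)
    have hd := hdist T.1 T'.1 hc hc' hTne
    have hsplit : (Finset.univ.filter fun i => Φ T.1 i = Φ T'.1 i).card
        + (Finset.univ.filter fun i => ¬(Φ T.1 i = Φ T'.1 i)).card = n := by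
      rw [Finset.card_filter_add_card_filter_not, Finset.card_univ, Fintype.card_fin]
    have hge : (Finset.univ.filter fun i => Φ T.1 i ≠ Φ T'.1 i).card
        = (Finset.univ.filter fun i => ¬(Φ T.1 i = Φ T'.1 i)).card := rfl
    omega
  -- extract the atom
  have hnonempty : good.Nonempty := by
    by_contra h
    rw [Finset.not_nonempty_iff_eq_empty] at h
    rw [h, Finset.sum_empty] at hgoodmass
    norm_num at hgoodmass
  obtain ⟨Ts, hTs⟩ := hnonempty
  refine ⟨Ts, hgcard Ts hTs, ?_⟩
  have : good = {Ts} := by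
    apply Finset.eq_singleton_iff_unique_mem.mpr
    exact ⟨hTs, fun T hT => huniq T hT Ts hTs⟩
  rw [this, Finset.sum_singleton] at hgoodmass
  exact hgoodmass

end AuxProof6
section AuxProof7

variable (N n q : ℕ) (Φ₁ Φ₂ : Finset (Fin N) → Fin n → Fin q)

lemma danger_extract₁ (ν : TIdx N → ℝ)
    (π₁ : Fin (2 * n)) (i₀ : Fin n) (hval : (π₁ : ℕ) = (i₀ : ℕ))
    (hd : DangerC N n q Φ₁ Φ₂ ν π₁) :
    ∃ β : Fin q, (1000/1001 : ℝ)
      ≤ ∑ T : TIdx N, (if T.1.card = N / 3 ∧ Φ₁ T.1 i₀ = β then ν T else 0) := by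
  obtain ⟨b, hb0, hb⟩ := hd
  have hred : ∀ T : TIdx N, inBstar N n q Φ₁ Φ₂ T.1 (π₁, b)
      ↔ (T.1.card = N / 3 ∧ (b : ℕ) = (Φ₁ T.1 i₀ : ℕ) + 1) := by
    intro T
    unfold inBstar
    by_cases hc : T.1.card = N / 3
    · rw [if_pos hc]
      constructor
      · rintro ⟨i, hi1, hi2⟩
        have h' : (π₁ : ℕ) = (i : ℕ) := hi1
        have : i = i₀ := Fin.ext (by omega)
        exact ⟨hc, by rw [← this]; exact hi2⟩
      · rintro ⟨-, h⟩
        exact ⟨i₀, hval, h⟩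
    · rw [if_neg hc]
      constructor
      · rintro ⟨i, hi1, -⟩
        have h' : (π₁ : ℕ) = n + (i : ℕ) := hi1
        have hlt : (i₀ : ℕ) < n := i₀.isLt
        omega
      · rintro ⟨h, -⟩
        exact absurd h hc
  have hPB : (1000/1001 : ℝ) ≤ PB N n q Φ₁ Φ₂ ν (π₁, b) := by linarith
  have hPBeq : PB N n q Φ₁ Φ₂ ν (π₁, b)
      = ∑ T : TIdx N, (if T.1.card = N / 3 ∧ (b : ℕ) = (Φ₁ T.1 i₀ : ℕ) + 1
          then ν T else 0) := by
    unfold PB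
    exact Finset.sum_congr rfl fun T _ => if_congr (hred T) rfl rfl
  rw [hPBeq] at hPB
  have hex : ∃ T₀ : TIdx N, T₀.1.card = N / 3 ∧ (b : ℕ) = (Φ₁ T₀.1 i₀ : ℕ) + 1 := by
    by_contra h
    push_neg at h
    have : ∀ T : TIdx N, (if T.1.card = N / 3 ∧ (b : ℕ) = (Φ₁ T.1 i₀ : ℕ) + 1
        then ν T else 0) = 0 := by
      intro T
      rw [if_neg]
      rintro ⟨h1, h2⟩
      exact absurd h2 (h T h1)
    rw [Finset.sum_congr rfl fun T _ => this T, Finset.sum_const_zero] at hPB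
    norm_num at hPB
  obtain ⟨T₀, hT₀c, hT₀b⟩ := hex
  refine ⟨Φ₁ T₀.1 i₀, ?_⟩
  have : ∀ T : TIdx N, (T.1.card = N / 3 ∧ (b : ℕ) = (Φ₁ T.1 i₀ : ℕ) + 1)
      ↔ (T.1.card = N / 3 ∧ Φ₁ T.1 i₀ = Φ₁ T₀.1 i₀) := by
    intro T
    constructor
    · rintro ⟨h1, h2⟩
      exact ⟨h1, Fin.ext (by omega)⟩
    · rintro ⟨h1, h2⟩
      exact ⟨h1, by rw [h2]; exact hT₀b⟩
  rw [← Finset.sum_congr rfl fun T _ => if_congr (this T) rfl rfl]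
  exact hPB

lemma danger_extract₂ (hN3 : N % 3 = 0) (hN : 0 < N) (ν : TIdx N → ℝ)
    (π₁ : Fin (2 * n)) (i₀ : Fin n) (hval : (π₁ : ℕ) = n + (i₀ : ℕ))
    (hd : DangerC N n q Φ₁ Φ₂ ν π₁) :
    ∃ β : Fin q, (1000/1001 : ℝ)
      ≤ ∑ T : TIdx N, (if T.1.card = 2 * N / 3 ∧ Φ₂ T.1 i₀ = β then ν T else 0) := by
  obtain ⟨b, hb0, hb⟩ := hd
  have hcc : N / 3 ≠ 2 * N / 3 := by omega
  have hred : ∀ T : TIdx N, inBstar N n q Φ₁ Φ₂ T.1 (π₁, b)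
      ↔ (T.1.card = 2 * N / 3 ∧ (b : ℕ) = q + 1 + (Φ₂ T.1 i₀ : ℕ)) := by
    intro T
    unfold inBstar
    by_cases hc : T.1.card = N / 3
    · rw [if_pos hc]
      constructor
      · rintro ⟨i, hi1, -⟩
        have h' : (π₁ : ℕ) = (i : ℕ) := hi1
        have hlt : (i : ℕ) < n := i.isLt
        omega
      · rintro ⟨h, -⟩
        exact absurd (hc.symm.trans h) hcc
    · rw [if_neg hc]
      have hc2 : T.1.card = 2 * N / 3 := T.2.resolve_left hc
      constructor
      · rintro ⟨i, hi1, hi2⟩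
        have h' : (π₁ : ℕ) = n + (i : ℕ) := hi1
        have : i = i₀ := Fin.ext (by omega)
        exact ⟨hc2, by rw [← this]; exact hi2⟩
      · rintro ⟨-, h⟩
        exact ⟨i₀, hval, h⟩
  have hPB : (1000/1001 : ℝ) ≤ PB N n q Φ₁ Φ₂ ν (π₁, b) := by linarith
  have hPBeq : PB N n q Φ₁ Φ₂ ν (π₁, b)
      = ∑ T : TIdx N, (if T.1.card = 2 * N / 3 ∧ (b : ℕ) = q + 1 + (Φ₂ T.1 i₀ : ℕ)
          then ν T else 0) := by
    unfold PB
    exact Finset.sum_congr rfl fun T _ => if_congr (hred T) rfl rfl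
  rw [hPBeq] at hPB
  have hex : ∃ T₀ : TIdx N, T₀.1.card = 2 * N / 3 ∧ (b : ℕ) = q + 1 + (Φ₂ T₀.1 i₀ : ℕ) := by
    by_contra h
    push_neg at h
    have : ∀ T : TIdx N, (if T.1.card = 2 * N / 3 ∧ (b : ℕ) = q + 1 + (Φ₂ T.1 i₀ : ℕ)
        then ν T else 0) = 0 := by
      intro T
      rw [if_neg]
      rintro ⟨h1, h2⟩
      exact absurd h2 (h T h1)
    rw [Finset.sum_congr rfl fun T _ => this T, Finset.sum_const_zero] at hPB
    norm_num at hPB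
  obtain ⟨T₀, hT₀c, hT₀b⟩ := hex
  refine ⟨Φ₂ T₀.1 i₀, ?_⟩
  have : ∀ T : TIdx N, (T.1.card = 2 * N / 3 ∧ (b : ℕ) = q + 1 + (Φ₂ T.1 i₀ : ℕ))
      ↔ (T.1.card = 2 * N / 3 ∧ Φ₂ T.1 i₀ = Φ₂ T₀.1 i₀) := by
    intro T
    constructor
    · rintro ⟨h1, h2⟩
      exact ⟨h1, Fin.ext (by omega)⟩
    · rintro ⟨h1, h2⟩
      exact ⟨h1, by rw [h2]; exact hT₀b⟩
  rw [← Finset.sum_congr rfl fun T _ => if_congr (this T) rfl rfl]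
  exact hPB

end AuxProof7
section AuxProof8

variable (N n q : ℕ) (Φ₁ Φ₂ : Finset (Fin N) → Fin n → Fin q)

lemma card_block1 (hn0 : 0 < n) :
    (Finset.univ.filter fun a : Fin (2 * n) => (a : ℕ) < n).card = n := by
  rw [Finset.card_filter, Fin.sum_univ_eq_sum_range (fun i => if i < n then 1 else 0)]
  rw [← Finset.card_filter]
  have : (Finset.range (2 * n)).filter (fun i => i < n) = Finset.range n := by
    ext i
    simp only [Finset.mem_filter, Finset.mem_range]
    omega
  rw [this, Finset.card_range]

lemma card_block2 (hn0 : 0 < n) :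
    (Finset.univ.filter fun a : Fin (2 * n) => ¬((a : ℕ) < n)).card = n := by
  have := Finset.card_filter_add_card_filter_not
    (s := (Finset.univ : Finset (Fin (2 * n)))) (p := fun a => (a : ℕ) < n)
  rw [Finset.card_univ, Fintype.card_fin] at this
  have h1 := card_block1 n hn0
  omega

lemma sum_p (B : Finset (Fin (2 * n))) (g : JointDec n q → ℝ) :
    ∑ π : JointDec n q,
        (if π.1 ∈ B ∧ (π.2 : ℕ) = 0 then ((B.card : ℝ))⁻¹ else 0) * g π
      = ((B.card : ℝ))⁻¹ * ∑ π₁ ∈ B, g (π₁, (0 : Fin (2 * q + 1))) := by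
  rw [Fintype.sum_prod_type]
  have h1 : ∀ π₁ : Fin (2 * n), ∑ π₂ : Fin (2 * q + 1),
      (if π₁ ∈ B ∧ (π₂ : ℕ) = 0 then ((B.card : ℝ))⁻¹ else 0) * g (π₁, π₂)
      = if π₁ ∈ B then ((B.card : ℝ))⁻¹ * g (π₁, (0 : Fin (2 * q + 1))) else 0 := by
    intro π₁
    have e : ∀ π₂ : Fin (2 * q + 1),
        (if π₁ ∈ B ∧ (π₂ : ℕ) = 0 then ((B.card : ℝ))⁻¹ else 0) * g (π₁, π₂)
        = if π₂ = (0 : Fin (2 * q + 1)) then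
            (if π₁ ∈ B then ((B.card : ℝ))⁻¹ * g (π₁, π₂) else 0) else 0 := by
      intro π₂
      by_cases h2 : π₂ = (0 : Fin (2 * q + 1))
      · by_cases h1 : π₁ ∈ B
        · rw [if_pos h2, if_pos h1, if_pos ⟨h1, by rw [h2]; rfl⟩]
        · rw [if_pos h2, if_neg h1, if_neg (fun hc => h1 hc.1), zero_mul]
      · have : (π₂ : ℕ) ≠ 0 := fun hc => h2 (Fin.ext (by simpa using hc))
        rw [if_neg h2, if_neg (fun hc => this hc.2), zero_mul]
    rw [Finset.sum_congr rfl fun π₂ _ => e π₂, Finset.sum_ite_eq' Finset.univ]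
    simp
  rw [Finset.sum_congr rfl fun π₁ _ => h1 π₁, ← Finset.sum_filter, Finset.mul_sum,
    Finset.filter_mem_eq_inter, Finset.univ_inter]

/-- combining Hellinger bounds via the triangle inequality -/
lemma hell_combine {f g u v : Fin N → ℝ}
    (h1 : hellSq f u ≤ 1/100) (h2 : hellSq g v ≤ 1/25)
    (h3 : (49/100 : ℝ) ≤ hellSq u v) :
    (1/100 : ℝ) ≤ hellSq f g := by
  have t1 : Real.sqrt (hellSq u v)
      ≤ Real.sqrt (hellSq u f) + Real.sqrt (hellSq f v) := hell_triangle u f v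
  have t2 : Real.sqrt (hellSq f v)
      ≤ Real.sqrt (hellSq f g) + Real.sqrt (hellSq g v) := hell_triangle f g v
  have e1 : Real.sqrt (hellSq u f) ≤ 1/10 := by
    rw [hellSq_comm]
    calc Real.sqrt (hellSq f u) ≤ Real.sqrt (1/100) := Real.sqrt_le_sqrt h1
      _ = 1/10 := by
          rw [show (1/100 : ℝ) = (1/10)^2 by norm_num, Real.sqrt_sq (by norm_num)]
  have e2 : Real.sqrt (hellSq g v) ≤ 1/5 := by
    calc Real.sqrt (hellSq g v) ≤ Real.sqrt (1/25) := Real.sqrt_le_sqrt h2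
      _ = 1/5 := by
          rw [show (1/25 : ℝ) = (1/5)^2 by norm_num, Real.sqrt_sq (by norm_num)]
  have e3 : (7/10 : ℝ) ≤ Real.sqrt (hellSq u v) := by
    rw [show (7/10 : ℝ) = Real.sqrt ((7/10)^2) by rw [Real.sqrt_sq (by norm_num)]]
    exact Real.sqrt_le_sqrt (by norm_num at h3 ⊢; linarith)
  have hfg : (4/10 : ℝ) ≤ Real.sqrt (hellSq f g) := by linarith
  calc (1/100 : ℝ) ≤ (4/10 : ℝ)^2 := by norm_num
    _ ≤ Real.sqrt (hellSq f g)^2 := by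
        apply pow_le_pow_left₀ (by norm_num) hfg
    _ = hellSq f g := Real.sq_sqrt (hellSq_nonneg _ _)

/-- far case: triangle bound -/
lemma hell_far {f g u : Fin N → ℝ}
    (h1 : hellSq f u ≤ 1/100) (h2 : (1/25 : ℝ) ≤ hellSq g u) :
    (1/100 : ℝ) ≤ hellSq f g := by
  have t1 : Real.sqrt (hellSq g u)
      ≤ Real.sqrt (hellSq g f) + Real.sqrt (hellSq f u) := hell_triangle g f u
  have e1 : Real.sqrt (hellSq f u) ≤ 1/10 := by
    calc Real.sqrt (hellSq f u) ≤ Real.sqrt (1/100) := Real.sqrt_le_sqrt h1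
      _ = 1/10 := by
          rw [show (1/100 : ℝ) = (1/10)^2 by norm_num, Real.sqrt_sq (by norm_num)]
  have e2 : (1/5 : ℝ) ≤ Real.sqrt (hellSq g u) := by
    rw [show (1/5 : ℝ) = Real.sqrt ((1/5)^2) by rw [Real.sqrt_sq (by norm_num)]]
    exact Real.sqrt_le_sqrt (by norm_num at h2 ⊢; linarith)
  have hfg : (1/10 : ℝ) ≤ Real.sqrt (hellSq g f) := by linarith
  calc (1/100 : ℝ) ≤ (1/10 : ℝ)^2 := by norm_num
    _ ≤ Real.sqrt (hellSq g f)^2 := by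
        apply pow_le_pow_left₀ (by norm_num) hfg
    _ = hellSq g f := Real.sq_sqrt (hellSq_nonneg _ _)
    _ = hellSq f g := hellSq_comm g f

end AuxProof8
section AuxProof9

variable (N n q : ℕ) (Φ₁ Φ₂ : Finset (Fin N) → Fin n → Fin q)

lemma count_or_atom₁ (hq0 : 0 < q) (hn0 : 0 < n) (hqn : q = n) (hnN : 2 * N + 1 ≤ n)
    (hdist : ∀ T T' : Finset (Fin N), T.card = N / 3 → T'.card = N / 3 → T ≠ T' →
      q - N + 1 ≤ (Finset.univ.filter fun i : Fin n => Φ₁ T i ≠ Φ₁ T' i).card)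
    (ν : TIdx N → ℝ) (hν : ∀ T, 0 ≤ ν T) (hs : ∑ T : TIdx N, ν T = 1) :
    ((Finset.univ.filter fun a : Fin (2 * n) => (a : ℕ) < n).filter
        (DangerC N n q Φ₁ Φ₂ ν)).card ≤ 2 * N
      ∨ ∃ Ts : TIdx N, Ts.1.card = N / 3 ∧ (997/1001 : ℝ) ≤ ν Ts := by
  classical
  by_cases h : ((Finset.univ.filter fun a : Fin (2 * n) => (a : ℕ) < n).filter
      (DangerC N n q Φ₁ Φ₂ ν)).card ≤ 2 * N
  · exact Or.inl h
  right
  push_neg at h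
  set S := (Finset.univ.filter fun a : Fin (2 * n) => (a : ℕ) < n).filter
      (DangerC N n q Φ₁ Φ₂ ν) with hS
  have hmem : ∀ a ∈ S, (a : ℕ) < n ∧ DangerC N n q Φ₁ Φ₂ ν a := by
    intro a ha
    rw [hS, Finset.mem_filter, Finset.mem_filter] at ha
    exact ⟨ha.1.2, ha.2⟩
  set f : Fin (2 * n) → Fin n := fun a => ⟨(a : ℕ) % n, Nat.mod_lt _ hn0⟩ with hf
  have hinj : Set.InjOn f S := by
    intro a ha a' ha' hfa
    have h1 := (hmem a ha).1
    have h2 := (hmem a' ha').1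
    have : (a : ℕ) % n = (a' : ℕ) % n := congrArg Fin.val hfa
    rw [Nat.mod_eq_of_lt h1, Nat.mod_eq_of_lt h2] at this
    exact Fin.ext this
  set D := S.image f with hD
  have hDcard : 2 * N < D.card := by
    rw [hD, Finset.card_image_of_injOn hinj]
    exact h
  have hβe : ∀ i ∈ D, ∃ β : Fin q, (1000/1001 : ℝ)
      ≤ ∑ T : TIdx N, (if T.1.card = N / 3 ∧ Φ₁ T.1 i = β then ν T else 0) := by
    intro i hi
    rw [hD, Finset.mem_image] at hi
    obtain ⟨a, ha, rfl⟩ := hi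
    have h1 := (hmem a ha).1
    exact danger_extract₁ N n q Φ₁ Φ₂ ν a (f a)
      (by rw [hf]; exact (Nat.mod_eq_of_lt h1).symm) (hmem a ha).2
  have hβe' : ∀ i : Fin n, ∃ β : Fin q, i ∈ D → (1000/1001 : ℝ)
      ≤ ∑ T : TIdx N, (if T.1.card = N / 3 ∧ Φ₁ T.1 i = β then ν T else 0) := by
    intro i
    by_cases hi : i ∈ D
    · exact (hβe i hi).imp fun β hβ _ => hβ
    · exact ⟨⟨0, hq0⟩, fun h' => absurd h' hi⟩
  choose β hβ using hβe'
  exact atom_lemma N n q (N / 3) Φ₁ hqn hnN hdist ν hν hs D hDcard β (fun i hi => hβ i hi)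

lemma count_or_atom₂ (hq0 : 0 < q) (hn0 : 0 < n) (hqn : q = n) (hnN : 2 * N + 1 ≤ n)
    (hN3 : N % 3 = 0) (hN : 0 < N)
    (hdist : ∀ T T' : Finset (Fin N), T.card = 2 * N / 3 → T'.card = 2 * N / 3 → T ≠ T' →
      q - N + 1 ≤ (Finset.univ.filter fun i : Fin n => Φ₂ T i ≠ Φ₂ T' i).card)
    (ν : TIdx N → ℝ) (hν : ∀ T, 0 ≤ ν T) (hs : ∑ T : TIdx N, ν T = 1) :
    ((Finset.univ.filter fun a : Fin (2 * n) => ¬((a : ℕ) < n)).filter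
        (DangerC N n q Φ₁ Φ₂ ν)).card ≤ 2 * N
      ∨ ∃ Ts : TIdx N, Ts.1.card = 2 * N / 3 ∧ (997/1001 : ℝ) ≤ ν Ts := by
  classical
  set S := (Finset.univ.filter fun a : Fin (2 * n) => ¬((a : ℕ) < n)).filter
      (DangerC N n q Φ₁ Φ₂ ν) with hS
  by_cases h0 : S.card ≤ 2 * N
  · exact Or.inl h0
  right
  have h : 2 * N < S.card := by omega
  have hmem : ∀ a ∈ S, ¬((a : ℕ) < n) ∧ DangerC N n q Φ₁ Φ₂ ν a := by
    intro a ha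
    rw [hS, Finset.mem_filter, Finset.mem_filter] at ha
    exact ⟨ha.1.2, ha.2⟩
  set f : Fin (2 * n) → Fin n := fun a => ⟨((a : ℕ) - n) % n, Nat.mod_lt _ hn0⟩ with hf
  have hval : ∀ a ∈ S, (a : ℕ) = n + (f a : ℕ) := by
    intro a ha
    have h1 := (hmem a ha).1
    have h2 : (a : ℕ) < 2 * n := a.isLt
    rw [hf]
    simp only
    rw [Nat.mod_eq_of_lt (by omega)]
    omega
  have hinj : Set.InjOn f S := by
    intro a ha a' ha' hfa
    have h1 := hval a ha
    have h2 := hval a' ha'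
    have : (f a : ℕ) = (f a' : ℕ) := congrArg Fin.val hfa
    exact Fin.ext (by omega)
  set D := S.image f with hD
  have hDcard : 2 * N < D.card := by
    rw [hD, Finset.card_image_of_injOn hinj]
    exact h
  have hβe : ∀ i ∈ D, ∃ β : Fin q, (1000/1001 : ℝ)
      ≤ ∑ T : TIdx N, (if T.1.card = 2 * N / 3 ∧ Φ₂ T.1 i = β then ν T else 0) := by
    intro i hi
    rw [hD, Finset.mem_image] at hi
    obtain ⟨a, ha, rfl⟩ := hi
    exact danger_extract₂ N n q Φ₁ Φ₂ hN3 hN ν a (f a) (hval a ha) (hmem a ha).2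
  have hβe' : ∀ i : Fin n, ∃ β : Fin q, i ∈ D → (1000/1001 : ℝ)
      ≤ ∑ T : TIdx N, (if T.1.card = 2 * N / 3 ∧ Φ₂ T.1 i = β then ν T else 0) := by
    intro i
    by_cases hi : i ∈ D
    · exact (hβe i hi).imp fun β hβ _ => hβ
    · exact ⟨⟨0, hq0⟩, fun h' => absurd h' hi⟩
  choose β hβ using hβe'
  exact atom_lemma N n q (2 * N / 3) Φ₂ hqn hnN hdist ν hν hs D hDcard β (fun i hi => hβ i hi)

end AuxProof9
section AuxProof10

variable (N n q : ℕ) (Φ₁ Φ₂ : Finset (Fin N) → Fin n → Fin q)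

lemma final_bound (hn0 : 0 < n) (hcard : ∀ T : TIdx N, 0 < T.1.card)
    (ε γ : ℝ) (hε0 : 0 < ε) (hγ : 225 ≤ γ)
    (νb : {v : TIdx N → ℝ // v ∈ stdSimplex ℝ (TIdx N)})
    (B : Finset (Fin (2 * n))) (hB : 0 < B.card)
    (key : ∀ ν : TIdx N → ℝ, (∀ T, 0 ≤ ν T) → (∑ T : TIdx N, ν T = 1) →
      ((1/1000 : ℝ) * ((B.filter (DangerC N n q Φ₁ Φ₂ ν)).card : ℝ) ≤ ε * B.card)
      ∨ (1/100 : ℝ) ≤ hellSq (Ovec N ν) (Ovec N νb.1)) :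
    (⨅ p : {p : JointDec n q → ℝ // p ∈ stdSimplex ℝ (JointDec n q)},
      ⨆ ν : {v : TIdx N → ℝ // v ∈ stdSimplex ℝ (TIdx N)},
        ∑ π : JointDec n q, p.1 π *
          (gapLB N n q (mixT N n q Φ₁ Φ₂ ν.1) π
            - γ * hellSq (mixT N n q Φ₁ Φ₂ ν.1 π) (mixT N n q Φ₁ Φ₂ νb.1 π))) ≤ ε := by
  classical
  have hBR : (0:ℝ) < (B.card : ℝ) := by exact_mod_cast hB
  set p : JointDec n q → ℝ :=
    fun π => if π.1 ∈ B ∧ (π.2 : ℕ) = 0 then ((B.card : ℝ))⁻¹ else 0 with hp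
  have hpmem : p ∈ stdSimplex ℝ (JointDec n q) := by
    constructor
    · intro π
      rw [hp]
      dsimp only
      split
      · positivity
      · exact le_rfl
    · have h1 := sum_p n q B (fun _ => (1:ℝ))
      simp only [mul_one] at h1
      rw [hp]
      rw [h1, Finset.sum_const, nsmul_eq_mul]
      field_simp
  have hbdd : BddBelow (Set.range fun p' : {p' : JointDec n q → ℝ //
      p' ∈ stdSimplex ℝ (JointDec n q)} =>
      ⨆ ν : {v : TIdx N → ℝ // v ∈ stdSimplex ℝ (TIdx N)},
        ∑ π : JointDec n q, p'.1 π *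
          (gapLB N n q (mixT N n q Φ₁ Φ₂ ν.1) π
            - γ * hellSq (mixT N n q Φ₁ Φ₂ ν.1 π) (mixT N n q Φ₁ Φ₂ νb.1 π))) := by
    refine ⟨0, ?_⟩
    rintro x ⟨p', rfl⟩
    dsimp only
    have h0 : (0:ℝ) ≤ ∑ π : JointDec n q, p'.1 π *
        (gapLB N n q (mixT N n q Φ₁ Φ₂ νb.1) π
          - γ * hellSq (mixT N n q Φ₁ Φ₂ νb.1 π) (mixT N n q Φ₁ Φ₂ νb.1 π)) := by
      refine Finset.sum_nonneg fun π _ => ?_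
      rw [hellSq_self, mul_zero, sub_zero]
      exact mul_nonneg (p'.2.1 π) (gapLB_nonneg N n q _ hn0 π)
    by_cases hba : BddAbove (Set.range fun ν : {v : TIdx N → ℝ //
        v ∈ stdSimplex ℝ (TIdx N)} =>
        ∑ π : JointDec n q, p'.1 π *
          (gapLB N n q (mixT N n q Φ₁ Φ₂ ν.1) π
            - γ * hellSq (mixT N n q Φ₁ Φ₂ ν.1 π) (mixT N n q Φ₁ Φ₂ νb.1 π)))
    · exact le_ciSup_of_le hba νb h0
    · rw [Real.iSup_of_not_bddAbove hba]
  refine ciInf_le_of_le hbdd ⟨p, hpmem⟩ ?_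
  refine Real.iSup_le (fun ν => ?_) hε0.le
  obtain ⟨hν0, hν1⟩ := ν.2
  have hsum := sum_p n q B (fun π : JointDec n q =>
    gapLB N n q (mixT N n q Φ₁ Φ₂ ν.1) π
      - γ * hellSq (mixT N n q Φ₁ Φ₂ ν.1 π) (mixT N n q Φ₁ Φ₂ νb.1 π))
  have hEq : (∑ π : JointDec n q,
      (⟨p, hpmem⟩ : {p' : JointDec n q → ℝ // p' ∈ stdSimplex ℝ (JointDec n q)}).1 π *
        (gapLB N n q (mixT N n q Φ₁ Φ₂ ν.1) π
          - γ * hellSq (mixT N n q Φ₁ Φ₂ ν.1 π) (mixT N n q Φ₁ Φ₂ νb.1 π)))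
      = ((B.card : ℝ))⁻¹ * ∑ π₁ ∈ B,
        (gapLB N n q (mixT N n q Φ₁ Φ₂ ν.1) (π₁, (0 : Fin (2 * q + 1)))
          - γ * hellSq (mixT N n q Φ₁ Φ₂ ν.1 (π₁, (0 : Fin (2 * q + 1))))
              (mixT N n q Φ₁ Φ₂ νb.1 (π₁, (0 : Fin (2 * q + 1))))) := hsum
  rw [hEq]
  obtain ⟨H, hH⟩ : ∃ H : ℝ, H = hellSq (Ovec N ν.1) (Ovec N νb.1) := ⟨_, rfl⟩
  have hHnn : 0 ≤ H := hH ▸ hellSq_nonneg _ _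
  have hOterm : ∀ π₁ : Fin (2 * n),
      hellSq (mixT N n q Φ₁ Φ₂ ν.1 (π₁, (0 : Fin (2 * q + 1))))
        (mixT N n q Φ₁ Φ₂ νb.1 (π₁, (0 : Fin (2 * q + 1)))) = H :=
    fun π₁ => by rw [hH]; exact hell_mix_at_zero N n q Φ₁ Φ₂ ν.1 νb.1 π₁
  have hsplit : ∑ π₁ ∈ B, (gapLB N n q (mixT N n q Φ₁ Φ₂ ν.1) (π₁, (0 : Fin (2 * q + 1)))
      - γ * hellSq (mixT N n q Φ₁ Φ₂ ν.1 (π₁, (0 : Fin (2 * q + 1))))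
          (mixT N n q Φ₁ Φ₂ νb.1 (π₁, (0 : Fin (2 * q + 1)))))
      = (∑ π₁ ∈ B, gapLB N n q (mixT N n q Φ₁ Φ₂ ν.1) (π₁, (0 : Fin (2 * q + 1))))
        - (B.card : ℝ) * (γ * H) := by
    rw [Finset.sum_sub_distrib]
    congr 1
    rw [Finset.sum_congr rfl fun π₁ _ => by rw [hOterm π₁], Finset.sum_const, nsmul_eq_mul]
  have hgap : ∑ π₁ ∈ B, gapLB N n q (mixT N n q Φ₁ Φ₂ ν.1) (π₁, (0 : Fin (2 * q + 1)))
      ≤ (1/1000 : ℝ) * ((B.filter (DangerC N n q Φ₁ Φ₂ ν.1)).card : ℝ) := by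
    have h1 : ∀ π₁ ∈ B, gapLB N n q (mixT N n q Φ₁ Φ₂ ν.1) (π₁, (0 : Fin (2 * q + 1)))
        ≤ if DangerC N n q Φ₁ Φ₂ ν.1 π₁ then 1/1000 else 0 :=
      fun π₁ _ => gap_le_danger N n q Φ₁ Φ₂ hcard hn0 ν.1 hν0 hν1 π₁
    calc ∑ π₁ ∈ B, gapLB N n q (mixT N n q Φ₁ Φ₂ ν.1) (π₁, (0 : Fin (2 * q + 1)))
        ≤ ∑ π₁ ∈ B, (if DangerC N n q Φ₁ Φ₂ ν.1 π₁ then (1/1000 : ℝ) else 0) :=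
          Finset.sum_le_sum h1
      _ = ∑ π₁ ∈ B.filter (DangerC N n q Φ₁ Φ₂ ν.1), (1/1000 : ℝ) :=
          (Finset.sum_filter _ _).symm
      _ = (1/1000 : ℝ) * ((B.filter (DangerC N n q Φ₁ Φ₂ ν.1)).card : ℝ) := by
          rw [Finset.sum_const, nsmul_eq_mul]; ring
  rw [hsplit]
  rcases key ν.1 hν0 hν1 with hk | hk
  · have h2 : (0:ℝ) ≤ (B.card : ℝ) * (γ * H) := by positivity
    have h3 : ((B.card : ℝ))⁻¹ * ((∑ π₁ ∈ B, gapLB N n q (mixT N n q Φ₁ Φ₂ ν.1)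
        (π₁, (0 : Fin (2 * q + 1)))) - (B.card : ℝ) * (γ * H))
        ≤ ((B.card : ℝ))⁻¹ * (ε * B.card) := by
      apply mul_le_mul_of_nonneg_left _ (by positivity)
      linarith
    calc _ ≤ ((B.card : ℝ))⁻¹ * (ε * B.card) := h3
      _ = ε := by
          rw [mul_comm ε, ← mul_assoc, inv_mul_cancel₀ (ne_of_gt hBR), one_mul]
  · have hcount : ((B.filter (DangerC N n q Φ₁ Φ₂ ν.1)).card : ℝ) ≤ (B.card : ℝ) := by
      exact_mod_cast Finset.card_filter_le B _
    rw [← hH] at hk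
    have hγH : (225/100 : ℝ) ≤ γ * H := by
      have a1 : 225 * H ≤ γ * H := mul_le_mul_of_nonneg_right hγ hHnn
      have a2 : (225:ℝ) * (1/100) ≤ 225 * H := by linarith
      linarith
    have h4 : (∑ π₁ ∈ B, gapLB N n q (mixT N n q Φ₁ Φ₂ ν.1) (π₁, (0 : Fin (2 * q + 1))))
        - (B.card : ℝ) * (γ * H) ≤ 0 := by
      have a3 : (B.card : ℝ) * (225/100) ≤ (B.card : ℝ) * (γ * H) :=
        mul_le_mul_of_nonneg_left hγH (le_of_lt hBR)
      linarith
    have := mul_nonpos_of_nonneg_of_nonpos (le_of_lt (inv_pos.2 hBR)) h4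
    linarith
  
end AuxProof10
/-- Lemma: DEC upper bound for the lower-bound construction:
in the two-player construction with `n = q = 2N/ε` and `Φ` satisfying
Condition 1, for every `γ ≥ 225`, `decoreg_γ(co(J)) ≤ ε`. -/
theorem decoregLB_le_eps (N n q : ℕ) (hN : 0 < N) (hN3 : N % 3 = 0) (hn : 0 < n)
    (ε : ℝ) (hε0 : 0 < ε) (hε1 : ε < 1)
    (hnval : (n : ℝ) = 2 * N / ε) (hq : q = n)
    (Φ₁ Φ₂ : Finset (Fin N) → Fin n → Fin q)
    (hcond1 : Condition1 N n q Φ₁ Φ₂)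
    (γ : ℝ) (hγ : 225 ≤ γ) :
    decoregLB N n q Φ₁ Φ₂ γ ≤ ε := by
  classical
  have hq0 : 0 < q := by omega
  have hnN : 2 * N + 1 ≤ n := by
    have hNR : (0:ℝ) < (N:ℝ) := by exact_mod_cast hN
    have h1 : (2 * N : ℝ) < (n : ℝ) := by
      rw [hnval, lt_div_iff₀ hε0]
      nlinarith
    have h2 : 2 * N < n := by exact_mod_cast h1
    omega
  have hcard : ∀ T : TIdx N, 0 < T.1.card := by
    rintro ⟨T, hT⟩
    rcases hT with h | h <;> simp only [h] <;> omega
  have hεn : ε * (n:ℝ) = 2 * N := by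
    rw [hnval]
    field_simp
  unfold decoregLB
  refine Real.iSup_le (fun νb => ?_) hε0.le
  by_cases hclose : ∃ Tb : TIdx N, hellSq (Ovec N νb.1) (uVec N Tb.1) < 1/25
  · obtain ⟨Tb, hTb⟩ := hclose
    have hm3 : 0 < N / 3 := by omega
    have h2m : 2 * N / 3 = 2 * (N / 3) := by omega
    rcases Tb.2 with hc1 | hc2
    · -- `Tb ∈ 𝒯₁`: play the second block
      refine final_bound N n q Φ₁ Φ₂ hn hcard ε γ hε0 hγ νb
        (Finset.univ.filter fun a : Fin (2 * n) => ¬((a : ℕ) < n))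
        (by rw [card_block2 n hn]; exact hn) ?_
      intro ν hν0 hν1
      rcases count_or_atom₂ N n q Φ₁ Φ₂ hq0 hn hq hnN hN3 hN hcond1.2 ν hν0 hν1 with
        hsmall | ⟨Ts, hTsc, hTsm⟩
      · left
        rw [card_block2 n hn]
        have : ((((Finset.univ.filter fun a : Fin (2 * n) => ¬((a : ℕ) < n)).filter
            (DangerC N n q Φ₁ Φ₂ ν)).card : ℝ)) ≤ 2 * N := by exact_mod_cast hsmall
        rw [hεn]
        linarith
      · right
        have h1 : hellSq (Ovec N ν) (uVec N Ts.1) ≤ 1/100 :=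
          hell_O_atom N hcard ν hν0 hν1 Ts hTsm
        have h3 : (49/100 : ℝ) ≤ hellSq (uVec N Ts.1) (uVec N Tb.1) := by
          rw [hellSq_comm]
          exact hell_uu N Tb.1 Ts.1 (N / 3) hm3 hc1 (by omega)
        exact hell_combine N h1 (le_of_lt hTb) h3
    · -- `Tb ∈ 𝒯₂`: play the first block
      refine final_bound N n q Φ₁ Φ₂ hn hcard ε γ hε0 hγ νb
        (Finset.univ.filter fun a : Fin (2 * n) => (a : ℕ) < n)
        (by rw [card_block1 n hn]; exact hn) ?_
      intro ν hν0 hν1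
      rcases count_or_atom₁ N n q Φ₁ Φ₂ hq0 hn hq hnN hcond1.1 ν hν0 hν1 with
        hsmall | ⟨Ts, hTsc, hTsm⟩
      · left
        rw [card_block1 n hn]
        have : ((((Finset.univ.filter fun a : Fin (2 * n) => ((a : ℕ) < n)).filter
            (DangerC N n q Φ₁ Φ₂ ν)).card : ℝ)) ≤ 2 * N := by exact_mod_cast hsmall
        rw [hεn]
        linarith
      · right
        have h1 : hellSq (Ovec N ν) (uVec N Ts.1) ≤ 1/100 :=
          hell_O_atom N hcard ν hν0 hν1 Ts hTsm
        have h3 : (49/100 : ℝ) ≤ hellSq (uVec N Ts.1) (uVec N Tb.1) :=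
          hell_uu N Ts.1 Tb.1 (N / 3) hm3 hTsc (by omega)
        exact hell_combine N h1 (le_of_lt hTb) h3
  · push_neg at hclose
    refine final_bound N n q Φ₁ Φ₂ hn hcard ε γ hε0 hγ νb Finset.univ
      (by rw [Finset.card_univ, Fintype.card_fin]; omega) ?_
    intro ν hν0 hν1
    rcases count_or_atom₁ N n q Φ₁ Φ₂ hq0 hn hq hnN hcond1.1 ν hν0 hν1 with
      hsmall1 | ⟨Ts, hTsc, hTsm⟩
    · rcases count_or_atom₂ N n q Φ₁ Φ₂ hq0 hn hq hnN hN3 hN hcond1.2 ν hν0 hν1 with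
        hsmall2 | ⟨Ts, hTsc, hTsm⟩
      · left
        have e1 : (Finset.univ.filter fun a : Fin (2 * n) => (a : ℕ) < n).filter
            (DangerC N n q Φ₁ Φ₂ ν)
            = (Finset.univ.filter (DangerC N n q Φ₁ Φ₂ ν)).filter
                (fun a : Fin (2 * n) => (a : ℕ) < n) := Finset.filter_comm _ _ _
        have e2 : (Finset.univ.filter fun a : Fin (2 * n) => ¬((a : ℕ) < n)).filter
            (DangerC N n q Φ₁ Φ₂ ν)
            = (Finset.univ.filter (DangerC N n q Φ₁ Φ₂ ν)).filter
                (fun a : Fin (2 * n) => ¬((a : ℕ) < n)) := Finset.filter_comm _ _ _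
        have e3 := Finset.card_filter_add_card_filter_not
          (s := Finset.univ.filter (DangerC N n q Φ₁ Φ₂ ν))
          (p := fun a : Fin (2 * n) => (a : ℕ) < n)
        rw [← e1, ← e2] at e3
        have hc : (Finset.univ.filter (DangerC N n q Φ₁ Φ₂ ν)).card ≤ 4 * N := by omega
        have hcR : (((Finset.univ.filter (DangerC N n q Φ₁ Φ₂ ν)).card : ℝ)) ≤ 4 * N := by
          exact_mod_cast hc
        rw [Finset.card_univ, Fintype.card_fin]
        have : ε * ((2 * n : ℕ) : ℝ) = 4 * N := by
          push_cast
          rw [show ε * (2 * (n:ℝ)) = 2 * (ε * n) by ring, hεn]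
          ring
        rw [this]
        linarith
      · right
        have h1 : hellSq (Ovec N ν) (uVec N Ts.1) ≤ 1/100 :=
          hell_O_atom N hcard ν hν0 hν1 Ts hTsm
        exact hell_far N h1 (hclose Ts)
    · right
      have h1 : hellSq (Ovec N ν) (uVec N Ts.1) ≤ 1/100 :=
        hell_O_atom N hcard ν hν0 hν1 Ts hTsm
      exact hell_far N h1 (hclose Ts)
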